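/- Fix x₁ ∈ (0, π/2) and m ∈ ℕ. Let j be the continuous function on (-π/2, π/2) with j(±x₁-side values) determined by: j(x₁) = 0, j solves φ'' - tan x φ' + 2φ = 0 separately on [x₁, π/2) and on [0, x₁], with one-sided derivatives at x₁ both equal to m in absolute value (derivative +m from the right, -m from the left). Then for m large enough, on |x - x₁| ≤ 3/m one has |j(x) - m·|x - x₁|| ≤ C/m and |j'(x) ∓ m| ≤ C (with sign according to the side), for an absolute constant C. -/

import Mathlib

open Real Set

lemma side_est (T m t₀ : ℝ) (hT : 0 ≤ T) (hm : 1 ≤ m)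
    (u u' u'' : ℝ → ℝ)
    (hu : ∀ x ∈ Icc t₀ (t₀ + 3/m), HasDerivAt u (u' x) x ∧ HasDerivAt u' (u'' x) x ∧
      |u'' x| ≤ T * |u' x| + 2 * |u x|)
    (h0 : u t₀ = 0) (h0' : u' t₀ = m) :
    ∀ x ∈ Icc t₀ (t₀ + 3/m), |u' x - m| ≤ (3*T+18) * Real.exp (3*(T+2)) ∧
      |u x - m * (x - t₀)| ≤ ((3*T+18) * Real.exp (3*(T+2))) * (x - t₀) := by
  have hm0 : 0 < m := by linarith
  have hδ0 : 0 < 3/m := by positivity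
  set δ : ℝ := 3/m with hδ
  set K : ℝ := T + 2 with hK
  set ε : ℝ := T * m + 6 with hε
  have hε0 : 0 ≤ ε := by nlinarith
  set C₀ : ℝ := (3*T+18) * Real.exp (3*(T+2)) with hC₀
  have hdu : ∀ x ∈ Icc t₀ (t₀ + δ),
      HasDerivAt (fun y => u y - m * (y - t₀)) (u' x - m) x := by
    intro x hx
    exact ((hu x hx).1.sub (((hasDerivAt_id' x).sub_const t₀).const_mul m)).congr_deriv (by ring)
  have hv' : ∀ x ∈ Icc t₀ (t₀ + δ),
      HasDerivAt (fun y => (u y - m * (y - t₀), u' y - m)) (u' x - m, u'' x) x := by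
    intro x hx
    exact (hdu x hx).prodMk ((hu x hx).2.1.sub_const m)
  have key := norm_le_gronwallBound_of_norm_deriv_right_le
    (f := fun y => (u y - m * (y - t₀), u' y - m))
    (f' := fun y => (u' y - m, u'' y)) (δ := 0) (K := K) (ε := ε) (a := t₀) (b := t₀ + δ)
    (fun x hx => ((hv' x hx).continuousAt).continuousWithinAt)
    (fun x hx => (hv' x (Ico_subset_Icc_self hx)).hasDerivWithinAt)
    (by simp [h0, h0', Prod.norm_def])
    (by
      intro x hx
      have hx' : x ∈ Icc t₀ (t₀ + δ) := Ico_subset_Icc_self hx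
      have hb := (hu x hx').2.2
      have hxt : 0 ≤ m * (x - t₀) := mul_nonneg hm0.le (by linarith [hx.1])
      have h1 : |u' x| - m ≤ |u' x - m| := by
        simpa [abs_of_nonneg hm0.le] using abs_sub_abs_le_abs_sub (u' x) m
      have h2 : |u x| - m * (x - t₀) ≤ |u x - m * (x - t₀)| := by
        simpa [abs_of_nonneg hxt] using abs_sub_abs_le_abs_sub (u x) (m * (x - t₀))
      have h3 : m * (x - t₀) ≤ 3 := by
        have hxu : x - t₀ ≤ 3/m := by
          have := hx.2; simp only [hδ] at this ⊢; linarith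
        have := mul_le_mul_of_nonneg_left hxu hm0.le
        calc m * (x - t₀) ≤ m * (3/m) := this
          _ = 3 := by field_simp
      simp only [Prod.norm_def, Real.norm_eq_abs]
      set A : ℝ := |u x - m * (x - t₀)|
      set B : ℝ := |u' x - m|
      have hA : A ≤ max A B := le_max_left _ _
      have hB : B ≤ max A B := le_max_right _ _
      have hM0 : 0 ≤ max A B := le_trans (abs_nonneg _) hA
      rw [max_le_iff]
      constructor
      · nlinarith
      · have e3 : T * B ≤ T * max A B := mul_le_mul_of_nonneg_left hB hT
        have e1 : T * |u' x| ≤ T * (B + m) := mul_le_mul_of_nonneg_left (by linarith) hT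
        nlinarith)
  have hKpos : (0:ℝ) < K := by rw [hK]; linarith
  have hgb : ∀ t : ℝ, 0 ≤ t → t ≤ δ → gronwallBound 0 K ε t ≤ C₀ := by
    intro t ht0 htδ
    rw [gronwallBound_of_K_ne_0 hKpos.ne']
    have hE := Real.exp_pos (K * t)
    have he1 : Real.exp (K*t) - 1 ≤ K * t * Real.exp (K*t) := by
      have hmul : Real.exp (-(K*t)) * Real.exp (K*t) = 1 := by
        rw [← Real.exp_add]; simp
      nlinarith [Real.add_one_le_exp (-(K*t))]
    have hE3 : Real.exp (K*t) ≤ Real.exp (3*K) := by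
      apply Real.exp_le_exp.mpr
      have h1 : K * t ≤ K * δ := mul_le_mul_of_nonneg_left htδ hKpos.le
      have h2 : δ ≤ 3 := by
        rw [hδ, div_le_iff₀ hm0]; nlinarith
      nlinarith
    have hεδ : ε * δ ≤ 3*T + 18 := by
      have : ε * δ = (ε * 3) / m := by rw [hδ]; ring
      rw [this, div_le_iff₀ hm0, hε]; nlinarith
    have step1 : ε/K * (Real.exp (K*t) - 1) ≤ ε/K * (K * t * Real.exp (K*t)) :=
      mul_le_mul_of_nonneg_left he1 (by positivity)
    have step2 : ε/K * (K * t * Real.exp (K*t)) = ε * t * Real.exp (K*t) := by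
      field_simp
    have step3 : ε * t * Real.exp (K*t) ≤ (ε * δ) * Real.exp (3*K) := by
      have h1 : ε * t ≤ ε * δ := mul_le_mul_of_nonneg_left htδ hε0
      exact mul_le_mul h1 hE3 hE.le (by positivity)
    have step4 : (ε * δ) * Real.exp (3*K) ≤ (3*T+18) * Real.exp (3*K) :=
      mul_le_mul_of_nonneg_right hεδ (Real.exp_pos _).le
    have hCeq : C₀ = (3*T+18) * Real.exp (3*K) := by rw [hC₀, hK]
    show 0 * Real.exp (K*t) + ε/K * (Real.exp (K*t) - 1) ≤ C₀
    calc 0 * Real.exp (K*t) + ε/K * (Real.exp (K*t) - 1)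
        = ε/K * (Real.exp (K*t) - 1) := by ring
      _ ≤ ε/K * (K * t * Real.exp (K*t)) := step1
      _ = ε * t * Real.exp (K*t) := step2
      _ ≤ (ε * δ) * Real.exp (3*K) := step3
      _ ≤ (3*T+18) * Real.exp (3*K) := step4
      _ = C₀ := hCeq.symm
  intro x hx
  have hx1 : t₀ ≤ x := hx.1
  have hvC : ∀ y ∈ Icc t₀ (t₀ + δ), |u' y - m| ≤ C₀ := by
    intro y hy
    have h := (key y hy).trans (hgb (y - t₀) (by linarith [hy.1]) (by linarith [hy.2]))
    calc |u' y - m| ≤ ‖(u y - m * (y - t₀), u' y - m)‖ := by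
          rw [Prod.norm_def]; simpa [Real.norm_eq_abs] using le_max_right _ _
      _ ≤ C₀ := h
  refine ⟨hvC x hx, ?_⟩
  have hmvt := Convex.norm_image_sub_le_of_norm_hasDerivWithin_le
    (f := fun y => u y - m * (y - t₀)) (f' := fun y => u' y - m) (s := Icc t₀ (t₀ + δ))
    (fun y hy => (hdu y hy).hasDerivWithinAt)
    (fun y hy => by rw [Real.norm_eq_abs]; exact hvC y hy)
    (convex_Icc _ _) (left_mem_Icc.mpr (by linarith)) hx
  simpa [h0, Real.norm_eq_abs, abs_of_nonneg (show (0:ℝ) ≤ x - t₀ by linarith)] using hmvt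

theorem ode_corner_solution_estimate (a b : ℝ) (ha : 0 < a) (hb : b < π/2) (hab : a ≤ b) :
    ∃ C > 0, ∃ N : ℕ, ∀ m : ℕ, N ≤ m → ∀ x₁ ∈ Icc a b,
      ∀ j jp jp' jp'' jm jm' jm'' : ℝ → ℝ,
        (∀ x ∈ Icc x₁ (x₁ + 3/(m:ℝ)),
            HasDerivAt jp (jp' x) x ∧ HasDerivAt jp' (jp'' x) x ∧
            jp'' x - tan x * jp' x + 2 * jp x = 0) →
        (∀ x ∈ Icc (x₁ - 3/(m:ℝ)) x₁,
            HasDerivAt jm (jm' x) x ∧ HasDerivAt jm' (jm'' x) x ∧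
            jm'' x - tan x * jm' x + 2 * jm x = 0) →
        jp x₁ = 0 → jp' x₁ = (m:ℝ) →
        jm x₁ = 0 → jm' x₁ = -(m:ℝ) →
        (∀ x ∈ Icc x₁ (x₁ + 3/(m:ℝ)), j x = jp x) →
        (∀ x ∈ Icc (x₁ - 3/(m:ℝ)) x₁, j x = jm x) →
        ∀ x ∈ Icc (x₁ - 3/(m:ℝ)) (x₁ + 3/(m:ℝ)),
          abs (j x - (m:ℝ) * |x - x₁|) ≤ C / (m:ℝ) ∧
          (x₁ ≤ x → |jp' x - (m:ℝ)| ≤ C) ∧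
          (x ≤ x₁ → |jm' x + (m:ℝ)| ≤ C) := by
  have hπ := Real.pi_pos
  set b' : ℝ := (b + π/2)/2 with hb'def
  have hbb' : b < b' := by rw [hb'def]; linarith
  have hb'π : b' < π/2 := by rw [hb'def]; linarith
  have hb'0 : 0 < b' := by rw [hb'def]; linarith
  set T : ℝ := Real.tan b' with hTdef
  have hT0 : 0 ≤ T := Real.tan_nonneg_of_nonneg_of_le_pi_div_two hb'0.le hb'π.le
  set C₀ : ℝ := (3*T+18) * Real.exp (3*(T+2)) with hC₀
  have hC₀pos : 0 < C₀ := by positivity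
  refine ⟨3 * C₀, by positivity, ?_⟩
  obtain ⟨N, hN⟩ := exists_nat_gt (max (6/a) (max (6/(π/2 - b)) 1))
  refine ⟨N, ?_⟩
  intro m hm x₁ hx₁ j jp jp' jp'' jm jm' jm'' hjpODE hjmODE hjp0 hjp1 hjm0 hjm1 hjeqp hjeqm
  have hmN : (N:ℝ) ≤ (m:ℝ) := Nat.cast_le.mpr hm
  have hm1 : (1:ℝ) ≤ (m:ℝ) := by
    have := (le_max_right (6/(π/2-b)) 1).trans (le_max_right (6/a) _)
    linarith [hN.le.trans hmN]
  have hm0 : (0:ℝ) < (m:ℝ) := by linarith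
  have h6a : 6/a < (m:ℝ) := lt_of_le_of_lt (le_max_left _ _) (hN.trans_le hmN)
  have h6b : 6/(π/2 - b) < (m:ℝ) :=
    lt_of_le_of_lt ((le_max_left _ _).trans (le_max_right (6/a) _)) (hN.trans_le hmN)
  have hδa : 3/(m:ℝ) ≤ a/2 := by
    rw [div_le_div_iff₀ hm0 (by norm_num)]
    rw [div_lt_iff₀ ha] at h6a
    nlinarith
  have hδb : 3/(m:ℝ) ≤ (π/2 - b)/2 := by
    rw [div_le_div_iff₀ hm0 (by norm_num)]
    rw [div_lt_iff₀ (by linarith : (0:ℝ) < π/2 - b)] at h6b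
    nlinarith
  have hδ0 : 0 < 3/(m:ℝ) := by positivity
  -- tan bound on the whole interval
  have htan : ∀ x ∈ Icc (x₁ - 3/(m:ℝ)) (x₁ + 3/(m:ℝ)), |Real.tan x| ≤ T := by
    intro x hx
    have hxa : a/2 ≤ x := by
      have := hx₁.1; have := hx.1; linarith
    have hxb : x ≤ b' := by
      have := hx₁.2; have := hx.2; rw [hb'def]; linarith
    rw [abs_of_nonneg (Real.tan_nonneg_of_nonneg_of_le_pi_div_two (by linarith) (by linarith))]
    rw [hTdef]
    rcases eq_or_lt_of_le hxb with h | h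
    · rw [h]
    · exact (Real.strictMonoOn_tan ⟨by linarith, by linarith⟩ ⟨by linarith, by linarith⟩ h).le
  -- right side
  have Hp := side_est T (m:ℝ) x₁ hT0 hm1 jp jp' jp''
    (by
      intro x hx
      obtain ⟨h1, h2, h3⟩ := hjpODE x hx
      refine ⟨h1, h2, ?_⟩
      have htx : |Real.tan x| ≤ T := htan x ⟨by linarith [hx.1], hx.2⟩
      have : jp'' x = Real.tan x * jp' x - 2 * jp x := by linarith
      rw [this]
      calc |Real.tan x * jp' x - 2 * jp x| ≤ |Real.tan x * jp' x| + |2 * jp x| := abs_sub _ _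
        _ = |Real.tan x| * |jp' x| + 2 * |jp x| := by
            rw [abs_mul, abs_mul]; norm_num
        _ ≤ T * |jp' x| + 2 * |jp x| := by
            have := mul_le_mul_of_nonneg_right htx (abs_nonneg (jp' x)); linarith)
    hjp0 hjp1
  -- left side, reflected
  have Hm := side_est T (m:ℝ) x₁ hT0 hm1
    (fun t => jm (2*x₁ - t)) (fun t => -jm' (2*x₁ - t)) (fun t => jm'' (2*x₁ - t))
    (by
      intro t ht
      have hmem : 2*x₁ - t ∈ Icc (x₁ - 3/(m:ℝ)) x₁ := ⟨by linarith [ht.2], by linarith [ht.1]⟩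
      obtain ⟨h1, h2, h3⟩ := hjmODE (2*x₁ - t) hmem
      have hinner : HasDerivAt (fun s : ℝ => 2*x₁ - s) (-1) t := by
        exact ((hasDerivAt_const t (2*x₁)).sub (hasDerivAt_id' t)).congr_deriv (by ring)
      refine ⟨?_, ?_, ?_⟩
      · have := h1.comp t hinner
        exact this.congr_deriv (by ring)
      · have := (h2.comp t hinner).neg
        exact this.congr_deriv (by ring)
      · have htx : |Real.tan (2*x₁ - t)| ≤ T :=
          htan _ ⟨by linarith [ht.2], by linarith [ht.1]⟩
        have heq : jm'' (2*x₁ - t) = Real.tan (2*x₁ - t) * jm' (2*x₁ - t) - 2 * jm (2*x₁ - t) := by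
          linarith
        show |jm'' (2*x₁ - t)| ≤ T * |-jm' (2*x₁ - t)| + 2 * |jm (2*x₁ - t)|
        rw [abs_neg, heq]
        calc |Real.tan (2*x₁-t) * jm' (2*x₁-t) - 2 * jm (2*x₁-t)|
            ≤ |Real.tan (2*x₁-t) * jm' (2*x₁-t)| + |2 * jm (2*x₁-t)| := abs_sub _ _
          _ = |Real.tan (2*x₁-t)| * |jm' (2*x₁-t)| + 2 * |jm (2*x₁-t)| := by
              rw [abs_mul, abs_mul]; norm_num
          _ ≤ T * |jm' (2*x₁-t)| + 2 * |jm (2*x₁-t)| := by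
              have := mul_le_mul_of_nonneg_right htx (abs_nonneg (jm' (2*x₁-t))); linarith)
    (by show jm (2*x₁ - x₁) = 0; rw [show 2*x₁ - x₁ = x₁ by ring]; exact hjm0)
    (by show -jm' (2*x₁ - x₁) = (m:ℝ); rw [show 2*x₁ - x₁ = x₁ by ring, hjm1]; ring)
  -- conclusions
  intro x hx
  refine ⟨?_, ?_, ?_⟩
  · rcases le_total x₁ x with hxs | hxs
    · have hxmem : x ∈ Icc x₁ (x₁ + 3/(m:ℝ)) := ⟨hxs, hx.2⟩
      have h := (Hp x hxmem).2
      rw [← hC₀] at h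
      rw [hjeqp x hxmem, abs_of_nonneg (by linarith : (0:ℝ) ≤ x - x₁)]
      have hC : C₀ * (x - x₁) ≤ 3 * C₀ / (m:ℝ) := by
        have h1 : x - x₁ ≤ 3/(m:ℝ) := by linarith [hx.2]
        calc C₀ * (x - x₁) ≤ C₀ * (3/(m:ℝ)) := mul_le_mul_of_nonneg_left h1 hC₀pos.le
          _ = 3 * C₀ / (m:ℝ) := by ring
      calc |jp x - (m:ℝ) * (x - x₁)| ≤ C₀ * (x - x₁) := h
        _ ≤ 3 * C₀ / (m:ℝ) := hC
    · have hxmem : x ∈ Icc (x₁ - 3/(m:ℝ)) x₁ := ⟨hx.1, hxs⟩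
      have htmem : 2*x₁ - x ∈ Icc x₁ (x₁ + 3/(m:ℝ)) := ⟨by linarith, by linarith [hx.1]⟩
      have h := (Hm (2*x₁ - x) htmem).2
      rw [show 2*x₁ - (2*x₁ - x) = x by ring] at h
      rw [← hC₀] at h
      rw [hjeqm x hxmem, abs_of_nonpos (by linarith : x - x₁ ≤ 0)]
      have hC : C₀ * (2*x₁ - x - x₁) ≤ 3 * C₀ / (m:ℝ) := by
        have h1 : 2*x₁ - x - x₁ ≤ 3/(m:ℝ) := by linarith [hx.1]
        calc C₀ * (2*x₁ - x - x₁) ≤ C₀ * (3/(m:ℝ)) := mul_le_mul_of_nonneg_left h1 hC₀pos.le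
          _ = 3 * C₀ / (m:ℝ) := by ring
      calc |jm x - (m:ℝ) * -(x - x₁)|
          = |jm x - (m:ℝ) * (2*x₁ - x - x₁)| := by
            rw [show (m:ℝ) * -(x - x₁) = (m:ℝ) * (2*x₁ - x - x₁) by ring]
        _ ≤ C₀ * (2*x₁ - x - x₁) := h
        _ ≤ 3 * C₀ / (m:ℝ) := hC
  · intro hxs
    have h := (Hp x ⟨hxs, hx.2⟩).1
    rw [← hC₀] at h
    calc |jp' x - (m:ℝ)| ≤ C₀ := h
      _ ≤ 3 * C₀ := by linarith
  · intro hxs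
    have htmem : 2*x₁ - x ∈ Icc x₁ (x₁ + 3/(m:ℝ)) := ⟨by linarith, by linarith [hx.1]⟩
    have h := (Hm (2*x₁ - x) htmem).1
    rw [show 2*x₁ - (2*x₁ - x) = x by ring] at h
    have : |(-jm' x) - (m:ℝ)| = |jm' x + (m:ℝ)| := by
      rw [show -jm' x - (m:ℝ) = -(jm' x + (m:ℝ)) by ring, abs_neg]
    rw [this, ← hC₀] at h
    calc |jm' x + (m:ℝ)| ≤ C₀ := h
      _ ≤ 3 * C₀ := by linarith
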